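/- Consider a triangular array: for each n, a probability space carrying sub-σ-algebras 𝓕₁ⁿ ⊆ 𝓕₂ⁿ, square-integrable 𝓕₁ⁿ-measurable random variables F̂ⁿ,¹,…,F̂ⁿ,ᴹ⁽ⁿ⁾ and square-integrable 𝓕₂ⁿ-measurable random variables F̂*ⁿ,¹,…,F̂*ⁿ,ᴹ⁽ⁿ⁾, and let F₁ ∈ ℝ. Assume: (3.2) writing Rₙᵐ = E(F̂*ⁿ,ᵐ | 𝓕₁ⁿ) − F̂ⁿ,ᵐ, one has max_m n·|Rₙᵐ| → 0 in probability; (3.7) Σ_{m=1}^{M(n)} (F̂ⁿ,ᵐ − F₁) = Aₙ + Bₙ with (Aₙ·M(n)^{−1/2}) and (Bₙ·n^{1/2}·M(n)^{−1}) bounded in probability; (3.8) Σ_{m=1}^{M(n)} ((F̂ⁿ,ᵐ)² − F₁²) = A′ₙ + B′ₙ with (A′ₙ·M(n)^{−1/2}) and (B′ₙ·n^{1/2}·M(n)^{−1}) bounded in probability; (3.9) n/I(n)² → 0; (3.10) I(n)²/M(n) is bounded. Then n·[ (1/(M(n)I(n)))·Σ_{m=1}^{M(n)} ( E(F̂*ⁿ,ᵐ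 | 𝓕₁ⁿ) )² − (1/(M(n)²I(n)))·( Σ_{m=1}^{M(n)} E(F̂*ⁿ,ᵐ | 𝓕₁ⁿ) )² ] → 0 in probability as n → ∞. -/

import Mathlib

open MeasureTheory ProbabilityTheory Finset Filter

/-- A triangular array of real random variables is bounded in probability
(`O_p(1)`): for every `ε > 0` there is `K > 0` such that
`P(|Xₙ| ≥ K) ≤ ε` for all `n`. -/
def BddInProb (Ω : ℕ → Type*) [∀ n, MeasurableSpace (Ω n)]
    (μ : ∀ n, Measure (Ω n)) (X : ∀ n, Ω n → ℝ) : Prop :=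
  ∀ ε : ℝ, 0 < ε → ∃ K : ℝ, 0 < K ∧
    ∀ n, μ n {ω | K ≤ abs (X n ω)} ≤ ENNReal.ofReal ε

/-- Convergence to zero in probability for a triangular array. -/
def TendZeroProb (Ω : ℕ → Type*) [∀ n, MeasurableSpace (Ω n)]
    (μ : ∀ n, Measure (Ω n)) (X : ∀ n, Ω n → ℝ) : Prop :=
  ∀ ε : ℝ, 0 < ε →
    Tendsto (fun n => μ n {ω | ε ≤ |X n ω|}) atTop (nhds 0)

section AuxDet

lemma sum_centered_sq (M : ℕ) (hM : (0:ℝ) < M) (x : Fin M → ℝ) :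
    ∑ m, (x m - (∑ k, x k) / M) ^ 2
      = ∑ m, x m ^ 2 - (∑ m, x m) ^ 2 / M := by
  have hM' : (M:ℝ) ≠ 0 := hM.ne'
  have h : ∀ m : Fin M, (x m - (∑ k, x k) / M) ^ 2
      = x m ^ 2 - (2 * ((∑ k, x k) / M)) * x m + ((∑ k, x k)/M)^2 := fun m => by ring
  rw [Finset.sum_congr rfl (fun m _ => h m)]
  rw [Finset.sum_add_distrib, Finset.sum_sub_distrib, Finset.sum_const, ← Finset.mul_sum]
  simp only [Finset.card_univ, Fintype.card_fin, nsmul_eq_mul]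
  field_simp
  ring

lemma var_nonneg (M : ℕ) (hM : (0:ℝ) < M) (x : Fin M → ℝ) :
    0 ≤ ∑ m, x m ^ 2 - (∑ m, x m) ^ 2 / M := by
  rw [← sum_centered_sq M hM x]; positivity

lemma var_bound (M : ℕ) (hM : (0:ℝ) < M) (e f r : Fin M → ℝ)
    (h : ∀ m, e m = f m + r m) :
    ∑ m, e m ^ 2 - (∑ m, e m) ^ 2 / M
      ≤ 2 * (∑ m, f m ^ 2 - (∑ m, f m) ^ 2 / M) + 2 * ∑ m, r m ^ 2 := by
  rw [← sum_centered_sq M hM e, ← sum_centered_sq M hM f]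
  have hsum : (∑ k, e k) = (∑ k, f k) + (∑ k, r k) := by
    rw [← Finset.sum_add_distrib]; exact Finset.sum_congr rfl (fun m _ => h m)
  have key : ∀ m : Fin M, (e m - (∑ k, e k)/M)^2
      ≤ 2*(f m - (∑ k, f k)/M)^2 + 2*(r m - (∑ k, r k)/M)^2 := by
    intro m
    have he : e m - (∑ k, e k)/M = (f m - (∑ k, f k)/M) + (r m - (∑ k, r k)/M) := by
      rw [h m, hsum]; ring
    rw [he]; nlinarith [sq_nonneg ((f m - (∑ k, f k)/M) - (r m - (∑ k, r k)/M))]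
  calc ∑ m, (e m - (∑ k, e k)/M)^2
      ≤ ∑ m, (2*(f m - (∑ k, f k)/M)^2 + 2*(r m - (∑ k, r k)/M)^2) :=
        Finset.sum_le_sum (fun m _ => key m)
    _ = 2*∑ m, (f m - (∑ k, f k)/M)^2 + 2*∑ m, (r m - (∑ k, r k)/M)^2 := by
        rw [Finset.sum_add_distrib, Finset.mul_sum, Finset.mul_sum]
    _ ≤ 2*∑ m, (f m - (∑ k, f k)/M)^2 + 2*∑ m, r m ^2 := by
        have h1 : ∑ m, (r m - (∑ k, r k)/M)^2 ≤ ∑ m, r m ^ 2 := by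
          rw [sum_centered_sq M hM r]
          have : 0 ≤ (∑ m, r m)^2 / M := by positivity
          linarith
        linarith

lemma pointwise_bound (Mn : ℕ) (hM : (0:ℝ) < Mn) {In nn : ℝ} (hIn : 0 < In) (hnn : 0 ≤ nn)
    (e f : Fin Mn → ℝ) (a b a' b' t : ℝ)
    (hsfa : ∑ m, (f m - t) = a + b)
    (hsf2a : ∑ m, (f m ^ 2 - t ^ 2) = a' + b') :
    nn * |(1/((Mn:ℝ)*In)) * ∑ m, e m ^ 2 - (1/((Mn:ℝ)^2*In)) * (∑ m, e m)^2|
      ≤ 2*nn/((Mn:ℝ)*In) * |a'| + 2*nn/((Mn:ℝ)*In) * |b'|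
        + 2*nn/((Mn:ℝ)*In) * (2*|t| * |a|) + 2*nn/((Mn:ℝ)*In) * (2*|t| * |b|)
        + 2*nn/((Mn:ℝ)*In) * ∑ m, (e m - f m)^2 := by
  have hMne : ((Mn:ℝ)) ≠ 0 := hM.ne'
  have hIne : In ≠ 0 := hIn.ne'
  have hsf : ∑ m, f m = a + b + (Mn:ℝ) * t := by
    have h2 : ∑ m, (f m - t) = (∑ m, f m) - (Mn:ℝ) * t := by
      rw [Finset.sum_sub_distrib, Finset.sum_const]
      simp [nsmul_eq_mul]
    rw [h2] at hsfa
    linarith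
  have hsf2 : ∑ m, f m ^ 2 = a' + b' + (Mn:ℝ) * t^2 := by
    have h2 : ∑ m, (f m ^ 2 - t ^ 2) = (∑ m, f m ^ 2) - (Mn:ℝ) * t^2 := by
      rw [Finset.sum_sub_distrib, Finset.sum_const]
      simp [nsmul_eq_mul]
    rw [h2] at hsf2a
    linarith
  have he : ∀ m, e m = f m + (e m - f m) := fun m => by ring
  have hV0 : 0 ≤ ∑ m, e m ^ 2 - (∑ m, e m)^2 / (Mn:ℝ) := var_nonneg Mn hM e
  have hexpr : (1/((Mn:ℝ)*In)) * ∑ m, e m ^ 2 - (1/((Mn:ℝ)^2*In)) * (∑ m, e m)^2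
      = (∑ m, e m ^ 2 - (∑ m, e m)^2 / (Mn:ℝ)) / ((Mn:ℝ) * In) := by
    field_simp
  rw [hexpr, abs_of_nonneg (div_nonneg hV0 (by positivity))]
  have hVb : ∑ m, e m ^ 2 - (∑ m, e m)^2 / (Mn:ℝ)
      ≤ 2 * (∑ m, f m ^ 2 - (∑ m, f m)^2 / (Mn:ℝ)) + 2 * ∑ m, (e m - f m) ^ 2 :=
    var_bound Mn hM e f (fun m => e m - f m) he
  have hVf : ∑ m, f m ^ 2 - (∑ m, f m)^2 / (Mn:ℝ)
      ≤ |a'| + |b'| + 2*|t| * |a| + 2*|t| * |b| := by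
    rw [hsf, hsf2]
    have hexp : (a + b + (Mn:ℝ) * t)^2 / (Mn:ℝ)
        = (a + b)^2/(Mn:ℝ) + 2*t*(a + b) + (Mn:ℝ)*t^2 := by
      field_simp
      ring
    rw [hexp]
    have h1 : 0 ≤ (a + b)^2/(Mn:ℝ) := by positivity
    have h2 : -(2*t*(a + b)) ≤ |2*t*(a + b)| := neg_le_abs _
    have h3 : |2*t*(a + b)| = 2*|t| * |a + b| := by
      rw [abs_mul, abs_mul]
      simp [abs_of_nonneg]
    have h4 : |a + b| ≤ |a| + |b| := abs_add_le _ _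
    have h5 : 2*|t| * |a + b| ≤ 2*|t| * (|a| + |b|) :=
      mul_le_mul_of_nonneg_left h4 (by positivity)
    have h6 : a' ≤ |a'| := le_abs_self _
    have h7 : b' ≤ |b'| := le_abs_self _
    rw [h3] at h2
    linarith
  have hS0 : 0 ≤ ∑ m, (e m - f m) ^ 2 := Finset.sum_nonneg (fun m _ => sq_nonneg _)
  have hnum : ∑ m, e m ^ 2 - (∑ m, e m)^2 / (Mn:ℝ)
      ≤ 2 * (|a'| + |b'| + 2*|t| * |a| + 2*|t| * |b|) + 2 * ∑ m, (e m - f m) ^ 2 := by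
    linarith
  have hmain : nn * ((∑ m, e m ^ 2 - (∑ m, e m)^2 / (Mn:ℝ)) / ((Mn:ℝ) * In))
      ≤ nn * ((2 * (|a'| + |b'| + 2*|t| * |a| + 2*|t| * |b|)
          + 2 * ∑ m, (e m - f m) ^ 2) / ((Mn:ℝ) * In)) := by
    apply mul_le_mul_of_nonneg_left _ hnn
    exact div_le_div_of_nonneg_right hnum (by positivity)
  refine le_trans hmain (le_of_eq ?_)
  field_simp


end AuxDet

section AuxProb

variable {Ω : ℕ → Type*} [mΩ : ∀ n, MeasurableSpace (Ω n)]
  {μ : ∀ n, Measure (Ω n)}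

lemma tendZeroProb_mono {X Y : ∀ n, Ω n → ℝ}
    (h : ∀ n ω, |X n ω| ≤ Y n ω) (hY : TendZeroProb Ω μ Y) :
    TendZeroProb Ω μ X := by
  intro ε hε
  refine tendsto_of_tendsto_of_tendsto_of_le_of_le tendsto_const_nhds (hY ε hε)
    (fun n => zero_le) (fun n => measure_mono ?_)
  intro ω hω
  simp only [Set.mem_setOf_eq] at *
  calc ε ≤ |X n ω| := hω
    _ ≤ Y n ω := h n ω
    _ ≤ |Y n ω| := le_abs_self _

lemma tendZeroProb_add {X Y : ∀ n, Ω n → ℝ}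
    (hX : TendZeroProb Ω μ X) (hY : TendZeroProb Ω μ Y) :
    TendZeroProb Ω μ (fun n ω => X n ω + Y n ω) := by
  intro ε hε
  have hε2 : 0 < ε / 2 := by linarith
  have hsub : ∀ n, {ω | ε ≤ |X n ω + Y n ω|} ⊆
      {ω | ε/2 ≤ |X n ω|} ∪ {ω | ε/2 ≤ |Y n ω|} := by
    intro n ω hω
    by_contra hc
    simp only [Set.mem_union, Set.mem_setOf_eq, not_or, not_le] at hc
    simp only [Set.mem_setOf_eq] at hω
    have := abs_add_le (X n ω) (Y n ω)
    linarith
  have hlim : Tendsto (fun n => μ n {ω | ε/2 ≤ |X n ω|} + μ n {ω | ε/2 ≤ |Y n ω|})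
      atTop (nhds 0) := by
    simpa using (hX (ε/2) hε2).add (hY (ε/2) hε2)
  refine tendsto_of_tendsto_of_tendsto_of_le_of_le tendsto_const_nhds hlim
    (fun n => zero_le) (fun n => ?_)
  exact le_trans (measure_mono (hsub n)) (measure_union_le _ _)

lemma bddInProb_abs {X : ∀ n, Ω n → ℝ} (hX : BddInProb Ω μ X) :
    BddInProb Ω μ (fun n ω => |X n ω|) := by
  intro ε hε
  obtain ⟨K, hK, hKb⟩ := hX ε hε
  exact ⟨K, hK, fun n => by simpa [abs_abs] using hKb n⟩

lemma tendZeroProb_smul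
    {X : ∀ n, Ω n → ℝ} (hX : BddInProb Ω μ X)
    {c : ℕ → ℝ} (hc : Tendsto c atTop (nhds 0)) :
    TendZeroProb Ω μ (fun n ω => c n * X n ω) := by
  intro ε hε
  rw [ENNReal.tendsto_nhds_zero]
  intro η hη
  obtain ⟨ε', hε'pos, hε'le⟩ : ∃ ε' : ℝ, 0 < ε' ∧ ENNReal.ofReal ε' ≤ η := by
    by_cases htop : η = ⊤
    · exact ⟨1, one_pos, htop ▸ le_top⟩
    · exact ⟨η.toReal, ENNReal.toReal_pos hη.ne' htop, (ENNReal.ofReal_toReal htop).le⟩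
  obtain ⟨K, hK, hKb⟩ := hX ε' hε'pos
  have hev : ∀ᶠ n in atTop, |c n| < ε / K := by
    have := Metric.tendsto_nhds.mp hc (ε / K) (div_pos hε hK)
    simpa [Real.dist_eq] using this
  filter_upwards [hev] with n hn
  have hsub : {ω | ε ≤ |c n * X n ω|} ⊆ {ω | K ≤ |X n ω|} := by
    intro ω hω
    simp only [Set.mem_setOf_eq, abs_mul] at *
    by_contra hlt
    push_neg at hlt
    have h1 : |c n| * |X n ω| ≤ |c n| * K :=
      mul_le_mul_of_nonneg_left hlt.le (abs_nonneg _)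
    have h2 : |c n| * K < (ε / K) * K := mul_lt_mul_of_pos_right hn hK
    rw [div_mul_cancel₀ _ hK.ne'] at h2
    linarith
  exact le_trans (measure_mono hsub) (le_trans (hKb n) hε'le)

end AuxProb

/-- under Assumptions (3.2), (3.7), (3.8), (3.9), (3.10), the
'bias' terms of the conditional variance decomposition, rescaled by `n`, are
asymptotically negligible (displays (5.14)/(5.15) of the paper). -/
theorem bias_terms_negligible
    (Ω : ℕ → Type*) [mΩ : ∀ n, MeasurableSpace (Ω n)]
    (μ : ∀ n, Measure (Ω n)) [∀ n, IsProbabilityMeasure (μ n)]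
    (𝓕₁ 𝓕₂ : ∀ n, MeasurableSpace (Ω n))
    (h12 : ∀ n, 𝓕₁ n ≤ 𝓕₂ n) (h2 : ∀ n, 𝓕₂ n ≤ mΩ n)
    (M I : ℕ → ℕ) (hI : ∀ n, 0 < I n) (hIM : ∀ n, I n ≤ M n)
    (F Fstar : ∀ n, Fin (M n) → Ω n → ℝ)
    (hFL2 : ∀ n m, MemLp (F n m) 2 (μ n))
    (hFmeas : ∀ n m, StronglyMeasurable[𝓕₁ n] (F n m))
    (hFstarL2 : ∀ n m, MemLp (Fstar n m) 2 (μ n))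
    (hFstarmeas : ∀ n m, StronglyMeasurable[𝓕₂ n] (Fstar n m))
    (F₁ : ℝ)
    -- Assumption (3.2): max_m n·|Rₙᵐ| → 0 in probability
    (h32 : ∀ ε : ℝ, 0 < ε →
      Tendsto (fun n => μ n {ω | ∃ m, ε ≤
          (n : ℝ) * abs (condExp (𝓕₁ n) (μ n) (Fstar n m) ω - F n m ω)})
        atTop (nhds 0))
    -- Assumption (3.7): Σ_m (F̂ⁿ,ᵐ − F₁) = O_p(M^{1/2}) + O_p(M·n^{−1/2})
    (h37 : ∃ A B : ∀ n, Ω n → ℝ,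
      (∀ n ω, ∑ m, (F n m ω - F₁) = A n ω + B n ω) ∧
      @BddInProb Ω mΩ μ (fun n ω => A n ω / Real.sqrt (M n)) ∧
      @BddInProb Ω mΩ μ (fun n ω => B n ω * Real.sqrt n / M n))
    -- Assumption (3.8): Σ_m ((F̂ⁿ,ᵐ)² − F₁²) = O_p(M^{1/2}) + O_p(M·n^{−1/2})
    (h38 : ∃ A B : ∀ n, Ω n → ℝ,
      (∀ n ω, ∑ m, ((F n m ω) ^ 2 - F₁ ^ 2) = A n ω + B n ω) ∧
      @BddInProb Ω mΩ μ (fun n ω => A n ω / Real.sqrt (M n)) ∧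
      @BddInProb Ω mΩ μ (fun n ω => B n ω * Real.sqrt n / M n))
    -- Assumption (3.9): n / I(n)² → 0
    (h39 : Tendsto (fun n : ℕ => (n : ℝ) / (I n : ℝ) ^ 2) atTop (nhds 0))
    -- Assumption (3.10): I(n)² / M(n) is bounded
    (h310 : ∃ K : ℝ, ∀ n, ((I n : ℝ)) ^ 2 / (M n : ℝ) ≤ K) :
    ∀ ε : ℝ, 0 < ε →
      Tendsto (fun n => μ n {ω | ε ≤ (n : ℝ) * abs
          ((1 / ((M n : ℝ) * (I n : ℝ))) *
              ∑ m, (condExp (𝓕₁ n) (μ n) (Fstar n m) ω) ^ 2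
            - (1 / ((M n : ℝ) ^ 2 * (I n : ℝ))) *
              (∑ m, condExp (𝓕₁ n) (μ n) (Fstar n m) ω) ^ 2)})
        atTop (nhds 0) := by
  obtain ⟨A, B, hAB, hA, hB⟩ := h37
  obtain ⟨A', B', hAB', hA', hB'⟩ := h38
  obtain ⟨K, hK⟩ := h310
  have hIpos : ∀ n, (0:ℝ) < I n := fun n => by exact_mod_cast hI n
  have hMposN : ∀ n, 0 < M n := fun n => lt_of_lt_of_le (hI n) (hIM n)
  have hMpos : ∀ n, (0:ℝ) < M n := fun n => by exact_mod_cast hMposN n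
  have hK0 : 0 ≤ K := le_trans (by positivity) (hK 0)
  -- deterministic rates
  set c1 : ℕ → ℝ := fun n => 2 * n / (I n * Real.sqrt (M n)) with hc1def
  set c2 : ℕ → ℝ := fun n => 2 * Real.sqrt n / I n with hc2def
  have hsqrtM : ∀ n, (0:ℝ) < Real.sqrt (M n) := fun n => Real.sqrt_pos.mpr (hMpos n)
  have hc1 : Tendsto c1 atTop (nhds 0) := by
    have hub : ∀ n, c1 n ≤ 2 * Real.sqrt K * ((n:ℝ) / (I n)^2) := by
      intro n
      have h1 : (I n : ℝ) / Real.sqrt (M n) = Real.sqrt ((I n)^2 / (M n)) := by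
        rw [Real.sqrt_div (sq_nonneg _), Real.sqrt_sq (hIpos n).le]
      have h2 : (I n : ℝ) / Real.sqrt (M n) ≤ Real.sqrt K := by
        rw [h1]; exact Real.sqrt_le_sqrt (hK n)
      have h3 : c1 n = 2 * ((n:ℝ) / (I n)^2) * ((I n : ℝ) / Real.sqrt (M n)) := by
        have hIne : ((I n:ℝ)) ≠ 0 := (hIpos n).ne'
        have hsne : Real.sqrt (M n) ≠ 0 := (hsqrtM n).ne'
        simp only [hc1def]
        field_simp
      rw [h3]
      have h4 : 0 ≤ 2 * ((n:ℝ) / (I n)^2) := by positivity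
      calc 2 * ((n:ℝ) / (I n)^2) * ((I n : ℝ) / Real.sqrt (M n))
          ≤ 2 * ((n:ℝ) / (I n)^2) * Real.sqrt K := mul_le_mul_of_nonneg_left h2 h4
        _ = 2 * Real.sqrt K * ((n:ℝ) / (I n)^2) := by ring
    have hlb : ∀ n, 0 ≤ c1 n := by
      intro n; simp only [hc1def]; positivity
    have hlim : Tendsto (fun n : ℕ => 2 * Real.sqrt K * ((n:ℝ) / (I n)^2)) atTop (nhds 0) := by
      simpa using h39.const_mul (2 * Real.sqrt K)
    exact tendsto_of_tendsto_of_tendsto_of_le_of_le tendsto_const_nhds hlim hlb hub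
  have hc2 : Tendsto c2 atTop (nhds 0) := by
    have heq : ∀ n, c2 n = 2 * Real.sqrt ((n:ℝ) / (I n)^2) := by
      intro n
      simp only [hc2def]
      rw [Real.sqrt_div (x := (n:ℝ)) (Nat.cast_nonneg n) ((I n:ℝ)^2),
        Real.sqrt_sq (hIpos n).le]
      ring
    have hlim : Tendsto (fun n : ℕ => 2 * Real.sqrt ((n:ℝ) / (I n)^2)) atTop (nhds 0) := by
      have hs : Tendsto (fun n : ℕ => Real.sqrt ((n:ℝ) / (I n)^2)) atTop (nhds 0) := by
        have := (Real.continuous_sqrt.tendsto 0).comp h39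
        simpa only [Function.comp_def, Real.sqrt_zero] using this
      simpa using hs.const_mul 2
    exact (funext heq : c2 = _) ▸ hlim
  have hc3 : Tendsto (fun n => 2 * |F₁| * c1 n) atTop (nhds 0) := by
    simpa using hc1.const_mul (2 * |F₁|)
  have hc4 : Tendsto (fun n => 2 * |F₁| * c2 n) atTop (nhds 0) := by
    simpa using hc2.const_mul (2 * |F₁|)
  -- the five dominating terms
  have hg1 : @TendZeroProb Ω mΩ μ (fun (n : ℕ) (ω : Ω n) => 2*(n:ℝ)/((M n:ℝ)*(I n:ℝ)) * |A' n ω|) := by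
    have := tendZeroProb_smul (mΩ := mΩ) (μ := μ) (bddInProb_abs (mΩ := mΩ) (μ := μ) hA') hc1
    have heq : (fun (n : ℕ) (ω : Ω n) => c1 n * |A' n ω / Real.sqrt (M n)|)
        = (fun (n : ℕ) (ω : Ω n) => 2*(n:ℝ)/((M n:ℝ)*(I n:ℝ)) * |A' n ω|) := by
      funext n ω
      rw [abs_div, abs_of_nonneg (Real.sqrt_nonneg _)]
      simp only [hc1def]
      set s := Real.sqrt ((M n : ℝ)) with hsdef
      have hs2 : s^2 = (M n:ℝ) := Real.sq_sqrt (hMpos n).le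
      rw [← hs2]; ring
    rw [← heq]; exact this
  have hg2 : @TendZeroProb Ω mΩ μ (fun (n : ℕ) (ω : Ω n) => 2*(n:ℝ)/((M n:ℝ)*(I n:ℝ)) * |B' n ω|) := by
    have := tendZeroProb_smul (mΩ := mΩ) (μ := μ) (bddInProb_abs (mΩ := mΩ) (μ := μ) hB') hc2
    have heq : (fun (n : ℕ) (ω : Ω n) => c2 n * |B' n ω * Real.sqrt n / M n|)
        = (fun (n : ℕ) (ω : Ω n) => 2*(n:ℝ)/((M n:ℝ)*(I n:ℝ)) * |B' n ω|) := by
      funext n ω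
      rw [abs_div, abs_mul, abs_of_nonneg (Real.sqrt_nonneg (n:ℝ)),
        abs_of_nonneg (hMpos n).le]
      simp only [hc2def]
      set t := Real.sqrt ((n : ℝ)) with htdef
      have ht2 : t^2 = (n:ℝ) := Real.sq_sqrt (Nat.cast_nonneg n)
      rw [← ht2]; ring
    rw [← heq]; exact this
  have hg3 : @TendZeroProb Ω mΩ μ
      (fun (n : ℕ) (ω : Ω n) => 2*(n:ℝ)/((M n:ℝ)*(I n:ℝ)) * (2*|F₁| * |A n ω|)) := by
    have := tendZeroProb_smul (mΩ := mΩ) (μ := μ) (bddInProb_abs (mΩ := mΩ) (μ := μ) hA) hc3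
    have heq : (fun (n : ℕ) (ω : Ω n) => (2*|F₁| *c1 n) * |A n ω / Real.sqrt (M n)|)
        = (fun (n : ℕ) (ω : Ω n) => 2*(n:ℝ)/((M n:ℝ)*(I n:ℝ)) * (2*|F₁| * |A n ω|)) := by
      funext n ω
      rw [abs_div, abs_of_nonneg (Real.sqrt_nonneg _)]
      simp only [hc1def]
      set s := Real.sqrt ((M n : ℝ)) with hsdef
      have hs2 : s^2 = (M n:ℝ) := Real.sq_sqrt (hMpos n).le
      rw [← hs2]; ring
    rw [← heq]; exact this
  have hg4 : @TendZeroProb Ω mΩ μ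
      (fun (n : ℕ) (ω : Ω n) => 2*(n:ℝ)/((M n:ℝ)*(I n:ℝ)) * (2*|F₁| * |B n ω|)) := by
    have := tendZeroProb_smul (mΩ := mΩ) (μ := μ) (bddInProb_abs (mΩ := mΩ) (μ := μ) hB) hc4
    have heq : (fun (n : ℕ) (ω : Ω n) => (2*|F₁| *c2 n) * |B n ω * Real.sqrt n / M n|)
        = (fun (n : ℕ) (ω : Ω n) => 2*(n:ℝ)/((M n:ℝ)*(I n:ℝ)) * (2*|F₁| * |B n ω|)) := by
      funext n ω
      rw [abs_div, abs_mul, abs_of_nonneg (Real.sqrt_nonneg (n:ℝ)),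
        abs_of_nonneg (hMpos n).le]
      simp only [hc2def]
      set t := Real.sqrt ((n : ℝ)) with htdef
      have ht2 : t^2 = (n:ℝ) := Real.sq_sqrt (Nat.cast_nonneg n)
      rw [← ht2]; ring
    rw [← heq]; exact this
  -- the remainder term
  have hg5 : @TendZeroProb Ω mΩ μ (fun (n : ℕ) (ω : Ω n) => 2*(n:ℝ)/((M n:ℝ)*(I n:ℝ)) *
      ∑ m, (condExp (𝓕₁ n) (μ n) (Fstar n m) ω - F n m ω)^2) := by
    intro ε hε
    set δ := Real.sqrt (ε/8) with hδdef
    have hδpos : 0 < δ := Real.sqrt_pos.mpr (by linarith)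
    have hδsq : δ^2 = ε/8 := Real.sq_sqrt (by linarith)
    refine tendsto_of_tendsto_of_tendsto_of_le_of_le tendsto_const_nhds (h32 δ hδpos)
      (fun n => zero_le) (fun n => measure_mono ?_)
    intro ω hω
    simp only [Set.mem_setOf_eq] at *
    by_contra hc
    push_neg at hc
    have hS0 : (0:ℝ) ≤ ∑ m, (condExp (𝓕₁ n) (μ n) (Fstar n m) ω - F n m ω)^2 :=
      Finset.sum_nonneg (fun m _ => sq_nonneg _)
    have hcoef : (0:ℝ) ≤ 2*(n:ℝ)/((M n:ℝ)*(I n:ℝ)) := by positivity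
    rw [abs_of_nonneg (mul_nonneg hcoef hS0)] at hω
    rcases Nat.eq_zero_or_pos n with hn0 | hn1
    · subst hn0
      simp only [Nat.cast_zero] at hω
      norm_num at hω
      linarith
    · have hn1' : (1:ℝ) ≤ (n:ℝ) := by exact_mod_cast hn1
      have hnpos : (0:ℝ) < n := by linarith
      have hterm : ∀ m : Fin (M n),
          (condExp (𝓕₁ n) (μ n) (Fstar n m) ω - F n m ω)^2 ≤ (δ/n)^2 := by
        intro m
        have h1 := hc m
        have h2 : |condExp (𝓕₁ n) (μ n) (Fstar n m) ω - F n m ω| ≤ δ / n := by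
          rw [le_div_iff₀ hnpos, mul_comm]
          exact h1.le
        calc (condExp (𝓕₁ n) (μ n) (Fstar n m) ω - F n m ω)^2
            = |condExp (𝓕₁ n) (μ n) (Fstar n m) ω - F n m ω|^2 := (sq_abs _).symm
          _ ≤ (δ/n)^2 := by
              apply pow_le_pow_left₀ (abs_nonneg _) h2
      have hSle : ∑ m, (condExp (𝓕₁ n) (μ n) (Fstar n m) ω - F n m ω)^2
          ≤ (M n : ℝ) * (δ/n)^2 := by
        calc ∑ m, (condExp (𝓕₁ n) (μ n) (Fstar n m) ω - F n m ω)^2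
            ≤ ∑ _m : Fin (M n), (δ/n)^2 := Finset.sum_le_sum (fun m _ => hterm m)
          _ = (M n : ℝ) * (δ/n)^2 := by
              rw [Finset.sum_const]
              simp [nsmul_eq_mul]
      have hbound : 2*(n:ℝ)/((M n:ℝ)*(I n:ℝ)) *
          ∑ m, (condExp (𝓕₁ n) (μ n) (Fstar n m) ω - F n m ω)^2
          ≤ 2 * δ^2 / ((n:ℝ) * (I n:ℝ)) := by
        have hnne : ((n:ℕ):ℝ) ≠ 0 := hnpos.ne'
        have hMne : ((M n:ℕ):ℝ) ≠ 0 := (hMpos n).ne'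
        have hIne : ((I n:ℕ):ℝ) ≠ 0 := (hIpos n).ne'
        have := mul_le_mul_of_nonneg_left hSle hcoef
        refine le_trans this (le_of_eq ?_)
        field_simp
      have hfin : 2 * δ^2 / ((n:ℝ) * (I n:ℝ)) ≤ 2 * δ^2 := by
        rw [div_le_iff₀ (mul_pos hnpos (hIpos n))]
        have hIn1 : (1:ℝ) ≤ (I n : ℝ) := by exact_mod_cast hI n
        have h1 : (1:ℝ) ≤ (n:ℝ) * (I n:ℝ) := by nlinarith
        nlinarith [sq_nonneg δ]
      linarith
  -- the dominating sum tends to zero in probability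
  have hG : @TendZeroProb Ω mΩ μ (fun (n : ℕ) (ω : Ω n) =>
      2*(n:ℝ)/((M n:ℝ)*(I n:ℝ)) * |A' n ω| + 2*(n:ℝ)/((M n:ℝ)*(I n:ℝ)) * |B' n ω|
      + 2*(n:ℝ)/((M n:ℝ)*(I n:ℝ)) * (2*|F₁| * |A n ω|)
      + 2*(n:ℝ)/((M n:ℝ)*(I n:ℝ)) * (2*|F₁| * |B n ω|)
      + 2*(n:ℝ)/((M n:ℝ)*(I n:ℝ)) *
          ∑ m, (condExp (𝓕₁ n) (μ n) (Fstar n m) ω - F n m ω)^2) :=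
    tendZeroProb_add (mΩ := mΩ) (μ := μ) (tendZeroProb_add (mΩ := mΩ) (μ := μ) (tendZeroProb_add (mΩ := mΩ) (μ := μ) (tendZeroProb_add (mΩ := mΩ) (μ := μ) hg1 hg2) hg3) hg4) hg5
  -- pointwise domination
  have hpt : ∀ (n : ℕ) (ω : Ω n), abs ((n:ℝ) * abs ((1 / ((M n : ℝ) * (I n : ℝ))) *
          ∑ m, (condExp (𝓕₁ n) (μ n) (Fstar n m) ω) ^ 2
        - (1 / ((M n : ℝ) ^ 2 * (I n : ℝ))) *
          (∑ m, condExp (𝓕₁ n) (μ n) (Fstar n m) ω) ^ 2)) ≤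
      2*(n:ℝ)/((M n:ℝ)*(I n:ℝ)) * |A' n ω| + 2*(n:ℝ)/((M n:ℝ)*(I n:ℝ)) * |B' n ω|
      + 2*(n:ℝ)/((M n:ℝ)*(I n:ℝ)) * (2*|F₁| * |A n ω|)
      + 2*(n:ℝ)/((M n:ℝ)*(I n:ℝ)) * (2*|F₁| * |B n ω|)
      + 2*(n:ℝ)/((M n:ℝ)*(I n:ℝ)) *
          ∑ m, (condExp (𝓕₁ n) (μ n) (Fstar n m) ω - F n m ω)^2 := by
    intro n ω
    have h := pointwise_bound (M n) (hMpos n) (hIpos n) (Nat.cast_nonneg n)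
      (fun m => condExp (𝓕₁ n) (μ n) (Fstar n m) ω) (fun m => F n m ω)
      (A n ω) (B n ω) (A' n ω) (B' n ω) F₁ (hAB n ω) (hAB' n ω)
    have habs : (0:ℝ) ≤ (n:ℝ) * |(1/((M n:ℝ)*(I n:ℝ))) *
          ∑ m, (condExp (𝓕₁ n) (μ n) (Fstar n m) ω) ^ 2
        - (1/((M n:ℝ)^2*(I n:ℝ))) * (∑ m, condExp (𝓕₁ n) (μ n) (Fstar n m) ω)^2| :=
      mul_nonneg (Nat.cast_nonneg n) (abs_nonneg _)
    rw [abs_of_nonneg habs]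
    exact h
  have htz := tendZeroProb_mono (mΩ := mΩ) (μ := μ) hpt hG
  intro ε hε
  have := htz ε hε
  refine this.congr (fun n => congrArg (μ n) ?_)
  ext ω
  simp only [Set.mem_setOf_eq]
  rw [abs_of_nonneg (mul_nonneg (Nat.cast_nonneg n) (abs_nonneg _))]
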